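/- Let v ∈ ℂ⁴ with ⟨v,v⟩ = 0 and ‖v‖² = 1/2, and let u ∈ ℂ⁴ \ {0} satisfy ⟨u,v⟩ = 0, ⟨u, conj v⟩ = 0, ⟨u,u⟩ = 0. Set T_v = {w : ⟨v,w⟩ = 0, Re(v,w) = 0} and T_v⁰ = {w ∈ T_v : ⟨w,w⟩ = 0}. Then T_v⁰ = (ℝ·(i v) + ℂ·u) ∪ (ℝ·(i v) + ℂ·conj(u)). -/

import Mathlib

/-- The standard complex bilinear symmetric form on `ℂⁿ`. -/
noncomputable def Bform {n : ℕ} (x y : Fin n → ℂ) : ℂ := ∑ i, x i * y i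

/-- The standard hermitian form on `ℂⁿ` (linear in the first variable). -/
noncomputable def Hform {n : ℕ} (x y : Fin n → ℂ) : ℂ := ∑ i, x i * star (y i)


set_option maxHeartbeats 1600000 in
/-- Decomposition of the isotropic cone `T_v⁰N` as the union of two real subspaces
`(ℝ·iv + ℂ·u) ∪ (ℝ·iv + ℂ·conj u)`. -/
theorem stmt_2 (v u : Fin 4 → ℂ)
    (hv : Bform v v = 0) (hn : Hform v v = 1 / 2)
    (hu0 : u ≠ 0) (huv : Bform u v = 0)
    (huvb : Bform u (fun i => star (v i)) = 0) (huu : Bform u u = 0) :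
    {w : Fin 4 → ℂ | Bform v w = 0 ∧ (Hform v w).re = 0 ∧ Bform w w = 0} =
      {w | ∃ (r : ℝ) (μ : ℂ), w = r • (Complex.I • v) + μ • u} ∪
      {w | ∃ (r : ℝ) (μ : ℂ), w = r • (Complex.I • v) + μ • fun i => star (u i)} := by
  simp only [Bform, Hform, Fin.sum_univ_four, Complex.star_def] at hv hn huv huvb huu ⊢
  have hvc := congrArg (starRingEnd ℂ) hv
  have hvub := congrArg (starRingEnd ℂ) huvb
  have huvc := congrArg (starRingEnd ℂ) huv
  have huuc := congrArg (starRingEnd ℂ) huu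
  simp only [map_add, map_mul, map_zero, map_div₀, map_one, map_ofNat,
    Complex.conj_conj] at hvc hvub huvc huuc
  set C := starRingEnd ℂ with hC
  set cu : ℂ := u 0 * C (u 0) + u 1 * C (u 1) + u 2 * C (u 2) + u 3 * C (u 3) with hcu
  have hcne : cu ≠ 0 := by
    have hrc : cu = ((Complex.normSq (u 0) + Complex.normSq (u 1) + Complex.normSq (u 2)
        + Complex.normSq (u 3) : ℝ) : ℂ) := by
      simp [hcu, hC, Complex.mul_conj]
    rw [hrc, Complex.ofReal_ne_zero]
    obtain ⟨i, hi⟩ := Function.ne_iff.mp hu0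
    have hi' : 0 < Complex.normSq (u i) := Complex.normSq_pos.mpr hi
    have h0 : 0 ≤ Complex.normSq (u 0) := Complex.normSq_nonneg _
    have h1 : 0 ≤ Complex.normSq (u 1) := Complex.normSq_nonneg _
    have h2 : 0 ≤ Complex.normSq (u 2) := Complex.normSq_nonneg _
    have h3 : 0 ≤ Complex.normSq (u 3) := Complex.normSq_nonneg _
    fin_cases i <;> positivity
  ext w
  simp only [Set.mem_setOf_eq, Set.mem_union]
  constructor
  · rintro ⟨hw1, hw2, hw3⟩
    set α : ℂ := 2 * (C (v 0) * w 0 + C (v 1) * w 1 + C (v 2) * w 2 + C (v 3) * w 3) with hα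
    set μ : ℂ := (C (u 0) * w 0 + C (u 1) * w 1 + C (u 2) * w 2 + C (u 3) * w 3) / cu with hμ
    set ν : ℂ := (u 0 * w 0 + u 1 * w 1 + u 2 * w 2 + u 3 * w 3) / cu with hν
    have hμc : μ * cu = C (u 0) * w 0 + C (u 1) * w 1 + C (u 2) * w 2 + C (u 3) * w 3 :=
      div_mul_cancel₀ _ hcne
    have hνc : ν * cu = u 0 * w 0 + u 1 * w 1 + u 2 * w 2 + u 3 * w 3 :=
      div_mul_cancel₀ _ hcne
    set M : Matrix (Fin 4) (Fin 4) ℂ :=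
      Matrix.of ![v, fun i => C (v i), u, fun i => C (u i)] with hM
    have hMMT : M * M.transpose =
        !![0, 1/2, 0, 0; 1/2, 0, 0, 0; 0, 0, 0, cu; 0, 0, cu, 0] := by
      ext i j
      fin_cases i <;> fin_cases j <;>
        simp [hM, Matrix.mul_apply, Matrix.transpose_apply, Matrix.vecHead, Matrix.vecTail,
          Fin.sum_univ_four] <;>
        first
          | linear_combination hv
          | linear_combination hn
          | linear_combination -hn
          | linear_combination huv
          | linear_combination -huv
          | linear_combination huvb
          | linear_combination -huvb
          | linear_combination hvub
          | linear_combination -hvub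
          | linear_combination huvc
          | linear_combination -huvc
          | linear_combination huu
          | linear_combination huuc
          | linear_combination hvc
          | linear_combination hcu
          | linear_combination -hcu
    have hdet : M.det ≠ 0 := by
      have h1 : M.det * M.det = cu ^ 2 / 4 := by
        have h2 := congrArg Matrix.det hMMT
        rw [Matrix.det_mul, Matrix.det_transpose] at h2
        rw [h2]
        simp [Matrix.det_succ_row_zero, Fin.sum_univ_succ, Fin.succAbove]
        ring
      intro h
      rw [h, mul_zero] at h1
      have h3 : cu ^ 2 = 0 := by linear_combination (-4 : ℂ) * h1
      exact hcne ((pow_eq_zero_iff two_ne_zero).mp h3)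
    have hq : (fun i => w i - α * v i - μ * u i - ν * C (u i)) = 0 := by
      apply Matrix.eq_zero_of_mulVec_eq_zero hdet
      funext j
      fin_cases j
      · simp [hM, Matrix.mulVec, dotProduct, Matrix.vecHead, Matrix.vecTail,
          Fin.sum_univ_four]
        linear_combination hw1 - α * hv - μ * huv - ν * hvub
      · simp [hM, Matrix.mulVec, dotProduct, Matrix.vecHead, Matrix.vecTail,
          Fin.sum_univ_four]
        linear_combination (-1/2 : ℂ) * hα - α * hn - μ * huvb - ν * huvc
      · simp [hM, Matrix.mulVec, dotProduct, Matrix.vecHead, Matrix.vecTail,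
          Fin.sum_univ_four]
        linear_combination -hνc - α * huv - μ * huu + ν * hcu
      · simp [hM, Matrix.mulVec, dotProduct, Matrix.vecHead, Matrix.vecTail,
          Fin.sum_univ_four]
        linear_combination -hμc - α * hvub + μ * hcu - ν * huuc
    have hwf : w = fun i => α * v i + μ * u i + ν * C (u i) := by
      funext i
      have h := congrFun hq i
      simp only [Pi.zero_apply] at h
      linear_combination h
    have hαre : α.re = 0 := by
      have hH : (v 0 * C (w 0) + v 1 * C (w 1) + v 2 * C (w 2) + v 3 * C (w 3)) = C α * (1/2) := by
        simp only [hwf, hC, map_add, map_mul, Complex.conj_conj]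
        linear_combination (C α) * hn + (C μ) * hvub + (C ν) * huv
      rw [hH] at hw2
      simp only [hC, Complex.mul_re, Complex.conj_re, Complex.conj_im] at hw2
      norm_num at hw2
      exact hw2
    have hαI : α = (α.im : ℝ) * Complex.I := by
      apply Complex.ext <;> simp [hαre]
    have hμν : μ * ν = 0 := by
      simp only [hwf] at hw3
      have h4 : 2 * (μ * ν) * cu = 0 := by
        linear_combination hw3 - α^2 * hv - μ^2 * huu - ν^2 * huuc
          - 2*α*μ * huv - 2*α*ν * hvub + 2*(μ*ν) * hcu
      rcases mul_eq_zero.mp h4 with h5 | h5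
      · rcases mul_eq_zero.mp h5 with h6 | h6
        · norm_num at h6
        · exact h6
      · exact absurd h5 hcne
    rcases mul_eq_zero.mp hμν with h5 | h5
    · right
      refine ⟨α.im, ν, ?_⟩
      rw [hwf]
      funext i
      simp only [Pi.add_apply, Pi.smul_apply, smul_eq_mul, Complex.real_smul]
      linear_combination (v i) * hαI + (u i) * h5
    · left
      refine ⟨α.im, μ, ?_⟩
      rw [hwf]
      funext i
      simp only [Pi.add_apply, Pi.smul_apply, smul_eq_mul, Complex.real_smul]
      linear_combination (v i) * hαI + (C (u i)) * h5
  · rintro (⟨r, μ, rfl⟩ | ⟨r, μ, rfl⟩)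
    · refine ⟨?_, ?_, ?_⟩
      · simp only [Pi.add_apply, Pi.smul_apply, smul_eq_mul, Complex.real_smul]
        linear_combination ((r : ℂ) * Complex.I) * hv + μ * huv
      · have hH : (v 0 * C ((r • (Complex.I • v) + μ • u) 0) +
            v 1 * C ((r • (Complex.I • v) + μ • u) 1) +
            v 2 * C ((r • (Complex.I • v) + μ • u) 2) +
            v 3 * C ((r • (Complex.I • v) + μ • u) 3)) = -(r : ℂ) * Complex.I * (1/2) := by
          simp only [Pi.add_apply, Pi.smul_apply, smul_eq_mul, Complex.real_smul, hC,
            map_add, map_mul, Complex.conj_ofReal, Complex.conj_I]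
          linear_combination (-(r : ℂ) * Complex.I) * hn + (C μ) * hvub
        rw [hH]
        simp
      · simp only [Pi.add_apply, Pi.smul_apply, smul_eq_mul, Complex.real_smul]
        linear_combination (((r:ℂ) * Complex.I)^2) * hv + (2 * (r:ℂ) * Complex.I * μ) * huv + μ^2 * huu
    · refine ⟨?_, ?_, ?_⟩
      · simp only [Pi.add_apply, Pi.smul_apply, smul_eq_mul, Complex.real_smul]
        linear_combination ((r : ℂ) * Complex.I) * hv + μ * hvub
      · have hH : (v 0 * C ((r • (Complex.I • v) + μ • fun i => C (u i)) 0) +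
            v 1 * C ((r • (Complex.I • v) + μ • fun i => C (u i)) 1) +
            v 2 * C ((r • (Complex.I • v) + μ • fun i => C (u i)) 2) +
            v 3 * C ((r • (Complex.I • v) + μ • fun i => C (u i)) 3)) =
              -(r : ℂ) * Complex.I * (1/2) := by
          simp only [Pi.add_apply, Pi.smul_apply, smul_eq_mul, Complex.real_smul, hC,
            map_add, map_mul, Complex.conj_ofReal, Complex.conj_I, Complex.conj_conj]
          linear_combination (-(r : ℂ) * Complex.I) * hn + (C μ) * huv
        rw [hH]
        simp
      · simp only [Pi.add_apply, Pi.smul_apply, smul_eq_mul, Complex.real_smul]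
        linear_combination (((r:ℂ) * Complex.I)^2) * hv + (2 * (r:ℂ) * Complex.I * μ) * hvub + μ^2 * huuc
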